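/- Let κ > 0 and p ∈ ℤ² with |p|_κ > √(3(κ² + 1))/(2(2 − √3)), equivalently p₁² + κ²p₂² > 3(κ² + 1)/(4(7 − 4√3)). Then there exists a ∈ ℤ² with a₁p₂ − a₂p₁ ≠ 0 such that the coefficients ρ_k = 1/|p|_κ² − 1/|a + kp|_κ² satisfy ρ₀ < 0, ρ_k > 0 for all k ∈ ℤ with k ≠ 0, and ρ₀ + ρ₂ < 0. -/

import Mathlib

set_option maxHeartbeats 0

private lemma cs_aux (c x₁ x₂ y₁ y₂ : ℝ) :
    (x₁*y₁ + c^2*(x₂*y₂))^2 ≤ (x₁^2 + c^2*x₂^2) * (y₁^2 + c^2*y₂^2) := by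
  nlinarith [sq_nonneg (c*(x₁*y₂ - x₂*y₁)), sq_nonneg (x₁*y₂ - x₂*y₁)]

private lemma neg_le_of_sq_le' (a b : ℝ) (hb : 0 ≤ b) (h : a^2 ≤ b^2) : -b ≤ a := by
  nlinarith [sq_nonneg (a + b)]

private lemma le_of_sq_le' (a b : ℝ) (hb : 0 ≤ b) (h : a^2 ≤ b^2) : a ≤ b := by
  nlinarith [sq_nonneg (a - b)]

private lemma neg_lt_of_sq_lt' (a b : ℝ) (hb : 0 ≤ b) (h : a^2 < b^2) : -b < a := by
  nlinarith [sq_nonneg (a + b)]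

set_option maxHeartbeats 0 in
private lemma aux_bounds (s P E Z D : ℝ)
    (hs2 : s^2 = 3) (hs1 : 1.732 < s)
    (hP0 : 0 < P) (hE0 : 0 ≤ E)
    (hEkey : 3*E < (7 - 4*s)*P)
    (hZ2 : Z^2 ≤ E*(P/3)) (hD2 : D^2 ≤ E*P)
    (hWp : (Z+D)^2 ≤ E*(4*P/3)) (hWm : (Z-D)^2 ≤ E*(4*P/3)) :
    ((17/100)*P ≤ P/3 + E + 2*Z) ∧
    (P/3 + E + 2*Z ≤ (537/1000)*P) ∧
    (0 < P/3 + E + 2*(Z+D)) ∧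
    (0 < P/3 + E + 2*(Z-D)) ∧
    (∀ k : ℝ, 4 ≤ k^2 → P < P/3 + E + 2*Z + 2*k*D + k^2*P) ∧
    (P/3 + E + 2*Z + 4*D + 4*P ≤ (129/25)*P) := by
  have hsP : 1.732*P < s*P := by nlinarith
  have hE24 : E < (3/125)*P := by linarith
  have hb0 : (0:ℝ) ≤ (9/100)*P + (100/27)*E := by linarith
  have h2Zu : 2*Z ≤ (9/100)*P + (100/27)*E := by
    apply le_of_sq_le' _ _ hb0
    linarith [hZ2, sq_nonneg ((9/100)*P - (100/27)*E)]
  have h2Zl : -((9/100)*P + (100/27)*E) ≤ 2*Z := by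
    apply neg_le_of_sq_le' _ _ hb0
    linarith [hZ2, sq_nonneg ((9/100)*P - (100/27)*E)]
  have hkeyQ : (16/3)*(E*P) < (P/3 + E)^2 := by
    have hA : 0 < (7-4*s)*P - 3*E := by linarith
    have hB : 0 < (7+4*s)*P - 3*E := by linarith [hsP, hP0]
    have hs2P : s^2*P^2 = 3*P^2 := by rw [hs2]
    linarith [mul_pos hA hB, hs2P]
  have hbE : (0:ℝ) ≤ P/3 + E := by linarith
  refine ⟨by linarith, by linarith, ?_, ?_, ?_, ?_⟩
  · have := neg_lt_of_sq_lt' (2*(Z+D)) (P/3+E) hbE (by linarith [hWp, hkeyQ])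
    linarith
  · have := neg_lt_of_sq_lt' (2*(Z-D)) (P/3+E) hbE (by linarith [hWm, hkeyQ])
    linarith
  · intro k hk4
    have hZl : -(P/3 + E) ≤ 2*Z := by
      apply neg_le_of_sq_le' _ _ hbE
      linarith [hZ2, sq_nonneg (P/3 - E)]
    have hkE : (0:ℝ) ≤ k^2*E + P := by
      linarith [mul_nonneg (sq_nonneg k) hE0]
    have hkD : -(k^2*E + P) ≤ 2*k*D := by
      apply neg_le_of_sq_le' _ _ hkE
      linarith [mul_le_mul_of_nonneg_left hD2 (sq_nonneg k), sq_nonneg (k^2*E - P)]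
    linarith [hZl, hkD, mul_nonneg (show (0:ℝ) ≤ k^2 - 4 by linarith)
      (show (0:ℝ) ≤ P - E by linarith)]
  · have h4D : 4*D ≤ (31/100)*P + (400/31)*E := by
      apply le_of_sq_le' _ _ (by linarith)
      linarith [hD2, sq_nonneg ((31/100)*P - (400/31)*E)]
    linarith

/-- If `|p|_κ > √(3(κ² + 1))/(2(2 - √3))`, there is a class representative
`a ∈ ℤ²` not parallel to `p` (i.e. `a₁p₂ - a₂p₁ ≠ 0`) whose coefficients
`ρ_k = 1/|p|_κ² - 1/|a + kp|_κ²` satisfy `ρ₀ < 0`, `ρ_k > 0` for `k ≠ 0`, and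
`ρ₀ + ρ₂ < 0`; these are the hypotheses of the instability proof. -/
theorem exists_unstable_class
    (κ : ℝ) (hκ : 0 < κ) (p₁ p₂ : ℤ)
    (hbig : Real.sqrt ((p₁ : ℝ) ^ 2 + κ ^ 2 * (p₂ : ℝ) ^ 2)
        > Real.sqrt (3 * (κ ^ 2 + 1)) / (2 * (2 - Real.sqrt 3))) :
    ∃ a₁ a₂ : ℤ,
      (a₁ * p₂ - a₂ * p₁ ≠ 0)
      ∧ (∀ k : ℤ, ((a₁ + k * p₁ : ℤ), (a₂ + k * p₂ : ℤ)) ≠ (0, 0))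
      ∧ (1 / ((p₁ : ℝ) ^ 2 + κ ^ 2 * (p₂ : ℝ) ^ 2)
          - 1 / ((a₁ : ℝ) ^ 2 + κ ^ 2 * (a₂ : ℝ) ^ 2) < 0)
      ∧ (∀ k : ℤ, k ≠ 0 →
          0 < 1 / ((p₁ : ℝ) ^ 2 + κ ^ 2 * (p₂ : ℝ) ^ 2)
            - 1 / (((a₁ + k * p₁ : ℤ) : ℝ) ^ 2 + κ ^ 2 * ((a₂ + k * p₂ : ℤ) : ℝ) ^ 2))
      ∧ ((1 / ((p₁ : ℝ) ^ 2 + κ ^ 2 * (p₂ : ℝ) ^ 2)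
            - 1 / ((a₁ : ℝ) ^ 2 + κ ^ 2 * (a₂ : ℝ) ^ 2))
          + (1 / ((p₁ : ℝ) ^ 2 + κ ^ 2 * (p₂ : ℝ) ^ 2)
            - 1 / (((a₁ + 2 * p₁ : ℤ) : ℝ) ^ 2 + κ ^ 2 * ((a₂ + 2 * p₂ : ℤ) : ℝ) ^ 2))
          < 0) := by
  set s : ℝ := Real.sqrt 3 with hsdef
  have hs0 : 0 ≤ s := Real.sqrt_nonneg 3
  have hs2 : s^2 = 3 := Real.sq_sqrt (by norm_num)
  have hs1 : (1.732:ℝ) < s := by nlinarith [hs2, hs0]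
  have hslt : s < 7/4 := by nlinarith [hs2, hs0]
  have hden : (0:ℝ) < 2*(2 - s) := by linarith
  have hκne : κ ≠ 0 := ne_of_gt hκ
  have hPnn : (0:ℝ) ≤ (p₁:ℝ)^2 + κ^2*(p₂:ℝ)^2 := by positivity
  have h3knn : (0:ℝ) ≤ 3*(κ^2+1) := by positivity
  -- translate the hypothesis into a polynomial inequality
  rw [gt_iff_lt, div_lt_iff₀ hden] at hbig
  have h2 := mul_self_lt_mul_self (Real.sqrt_nonneg (3*(κ^2+1))) hbig
  have e1 : Real.sqrt (3*(κ^2+1)) * Real.sqrt (3*(κ^2+1)) = 3*(κ^2+1) :=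
    Real.mul_self_sqrt h3knn
  have e2 : Real.sqrt ((p₁:ℝ)^2 + κ^2*(p₂:ℝ)^2) * Real.sqrt ((p₁:ℝ)^2 + κ^2*(p₂:ℝ)^2)
      = (p₁:ℝ)^2 + κ^2*(p₂:ℝ)^2 := Real.mul_self_sqrt hPnn
  have h3 : (Real.sqrt ((p₁:ℝ)^2 + κ^2*(p₂:ℝ)^2) * (2*(2-s)))
      * (Real.sqrt ((p₁:ℝ)^2 + κ^2*(p₂:ℝ)^2) * (2*(2-s)))
      = 4*(7-4*s)*((p₁:ℝ)^2 + κ^2*(p₂:ℝ)^2) := by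
    have : (Real.sqrt ((p₁:ℝ)^2 + κ^2*(p₂:ℝ)^2) * (2*(2-s)))
        * (Real.sqrt ((p₁:ℝ)^2 + κ^2*(p₂:ℝ)^2) * (2*(2-s)))
        = (Real.sqrt ((p₁:ℝ)^2 + κ^2*(p₂:ℝ)^2) * Real.sqrt ((p₁:ℝ)^2 + κ^2*(p₂:ℝ)^2))
          * (2*(2-s))^2 := by ring
    rw [this, e2]
    linear_combination (4*((p₁:ℝ)^2 + κ^2*(p₂:ℝ)^2))*hs2
  rw [e1, h3] at h2
  -- h2 : 3*(κ^2+1) < 4*(7-4*s)*P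
  have hP0 : (0:ℝ) < (p₁:ℝ)^2 + κ^2*(p₂:ℝ)^2 := by
    by_contra hc
    push_neg at hc
    nlinarith [mul_nonneg (show (0:ℝ) ≤ 7-4*s by linarith)
      (show (0:ℝ) ≤ -((p₁:ℝ)^2 + κ^2*(p₂:ℝ)^2) by linarith), sq_nonneg κ]
  -- the center of the disk: perpendicular to p in the κ-metric, of length √(P/3)
  set z₁ : ℝ := -(κ*(p₂:ℝ))*s/3 with hz1def
  set z₂ : ℝ := (p₁:ℝ)*s/(3*κ) with hz2def
  have hzq : z₁^2 + κ^2*z₂^2 = ((p₁:ℝ)^2 + κ^2*(p₂:ℝ)^2)/3 := by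
    rw [hz1def, hz2def]
    field_simp
    linear_combination (((p₁:ℝ)^2 + κ^2*(p₂:ℝ)^2)) * hs2
  have hzp : z₁*(p₁:ℝ) + κ^2*(z₂*(p₂:ℝ)) = 0 := by
    rw [hz1def, hz2def]; field_simp; ring
  set A1 : ℤ := round z₁ with hA1def
  set A2 : ℤ := round z₂ with hA2def
  have habs1 : |(A1:ℝ) - z₁| ≤ 1/2 := by rw [abs_sub_comm]; exact abs_sub_round z₁
  have habs2 : |(A2:ℝ) - z₂| ≤ 1/2 := by rw [abs_sub_comm]; exact abs_sub_round z₂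
  clear_value A1 A2 z₁ z₂ s
  have hd1 : ((A1:ℝ) - z₁)^2 ≤ 1/4 := by
    nlinarith only [habs1, abs_nonneg ((A1:ℝ) - z₁), sq_abs ((A1:ℝ) - z₁)]
  have hd2 : ((A2:ℝ) - z₂)^2 ≤ 1/4 := by
    nlinarith only [habs2, abs_nonneg ((A2:ℝ) - z₂), sq_abs ((A2:ℝ) - z₂)]
  have hE0 : (0:ℝ) ≤ ((A1:ℝ) - z₁)^2 + κ^2*((A2:ℝ) - z₂)^2 := by positivity
  have hEbound : ((A1:ℝ) - z₁)^2 + κ^2*((A2:ℝ) - z₂)^2 ≤ (κ^2+1)/4 := by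
    linarith only [hd1, mul_le_mul_of_nonneg_left hd2 (sq_nonneg κ)]
  have hEkey : 3*(((A1:ℝ) - z₁)^2 + κ^2*((A2:ℝ) - z₂)^2)
      < (7-4*s)*((p₁:ℝ)^2 + κ^2*(p₂:ℝ)^2) := by linarith only [hEbound, h2]
  have hE24 : ((A1:ℝ) - z₁)^2 + κ^2*((A2:ℝ) - z₂)^2
      < (3/125)*((p₁:ℝ)^2 + κ^2*(p₂:ℝ)^2) := by
    linarith only [hEkey, mul_lt_mul_of_pos_right hs1 hP0]
  -- Cauchy–Schwarz bounds
  have hZ2 : (((A1:ℝ) - z₁)*z₁ + κ^2*(((A2:ℝ) - z₂)*z₂))^2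
      ≤ (((A1:ℝ) - z₁)^2 + κ^2*((A2:ℝ) - z₂)^2)*(((p₁:ℝ)^2 + κ^2*(p₂:ℝ)^2)/3) := by
    have h := cs_aux κ ((A1:ℝ) - z₁) ((A2:ℝ) - z₂) z₁ z₂
    rw [hzq] at h
    exact h
  have hD2 : (((A1:ℝ) - z₁)*(p₁:ℝ) + κ^2*(((A2:ℝ) - z₂)*(p₂:ℝ)))^2
      ≤ (((A1:ℝ) - z₁)^2 + κ^2*((A2:ℝ) - z₂)^2)*((p₁:ℝ)^2 + κ^2*(p₂:ℝ)^2) := by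
    exact cs_aux κ ((A1:ℝ) - z₁) ((A2:ℝ) - z₂) (p₁:ℝ) (p₂:ℝ)
  have hq4p : (z₁+(p₁:ℝ))^2 + κ^2*(z₂+(p₂:ℝ))^2
      = 4*((p₁:ℝ)^2 + κ^2*(p₂:ℝ)^2)/3 := by
    linear_combination hzq + 2*hzp
  have hq4m : (z₁-(p₁:ℝ))^2 + κ^2*(z₂-(p₂:ℝ))^2
      = 4*((p₁:ℝ)^2 + κ^2*(p₂:ℝ)^2)/3 := by
    linear_combination hzq - 2*hzp
  have hWp : ((((A1:ℝ) - z₁)*z₁ + κ^2*(((A2:ℝ) - z₂)*z₂))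
        + (((A1:ℝ) - z₁)*(p₁:ℝ) + κ^2*(((A2:ℝ) - z₂)*(p₂:ℝ))))^2
      ≤ (((A1:ℝ) - z₁)^2 + κ^2*((A2:ℝ) - z₂)^2)*(4*((p₁:ℝ)^2 + κ^2*(p₂:ℝ)^2)/3) := by
    have h := cs_aux κ ((A1:ℝ) - z₁) ((A2:ℝ) - z₂) (z₁+(p₁:ℝ)) (z₂+(p₂:ℝ))
    rw [hq4p] at h
    have e : ((A1:ℝ) - z₁)*(z₁+(p₁:ℝ)) + κ^2*(((A2:ℝ) - z₂)*(z₂+(p₂:ℝ)))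
        = (((A1:ℝ) - z₁)*z₁ + κ^2*(((A2:ℝ) - z₂)*z₂))
          + (((A1:ℝ) - z₁)*(p₁:ℝ) + κ^2*(((A2:ℝ) - z₂)*(p₂:ℝ))) := by ring
    rw [e] at h
    exact h
  have hWm : ((((A1:ℝ) - z₁)*z₁ + κ^2*(((A2:ℝ) - z₂)*z₂))
        - (((A1:ℝ) - z₁)*(p₁:ℝ) + κ^2*(((A2:ℝ) - z₂)*(p₂:ℝ))))^2
      ≤ (((A1:ℝ) - z₁)^2 + κ^2*((A2:ℝ) - z₂)^2)*(4*((p₁:ℝ)^2 + κ^2*(p₂:ℝ)^2)/3) := by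
    have h := cs_aux κ ((A1:ℝ) - z₁) ((A2:ℝ) - z₂) (z₁-(p₁:ℝ)) (z₂-(p₂:ℝ))
    rw [hq4m] at h
    have e : ((A1:ℝ) - z₁)*(z₁-(p₁:ℝ)) + κ^2*(((A2:ℝ) - z₂)*(z₂-(p₂:ℝ)))
        = (((A1:ℝ) - z₁)*z₁ + κ^2*(((A2:ℝ) - z₂)*z₂))
          - (((A1:ℝ) - z₁)*(p₁:ℝ) + κ^2*(((A2:ℝ) - z₂)*(p₂:ℝ))) := by ring
    rw [e] at h
    exact h
  obtain ⟨B1, B2, B3p, B3m, B4, B5⟩ :=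
    aux_bounds s ((p₁:ℝ)^2 + κ^2*(p₂:ℝ)^2)
      (((A1:ℝ) - z₁)^2 + κ^2*((A2:ℝ) - z₂)^2)
      (((A1:ℝ) - z₁)*z₁ + κ^2*(((A2:ℝ) - z₂)*z₂))
      (((A1:ℝ) - z₁)*(p₁:ℝ) + κ^2*(((A2:ℝ) - z₂)*(p₂:ℝ)))
      hs2 hs1 hP0 hE0 hEkey hZ2 hD2 hWp hWm
  -- bridges between cast expressions and the algebraic expansion
  have hQ : ∀ k : ℤ, ((A1 + k * p₁ : ℤ) : ℝ)^2 + κ^2*((A2 + k * p₂ : ℤ) : ℝ)^2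
      = ((p₁:ℝ)^2 + κ^2*(p₂:ℝ)^2)/3 + (((A1:ℝ) - z₁)^2 + κ^2*((A2:ℝ) - z₂)^2)
        + 2*(((A1:ℝ) - z₁)*z₁ + κ^2*(((A2:ℝ) - z₂)*z₂))
        + 2*(k:ℝ)*(((A1:ℝ) - z₁)*(p₁:ℝ) + κ^2*(((A2:ℝ) - z₂)*(p₂:ℝ)))
        + (k:ℝ)^2*((p₁:ℝ)^2 + κ^2*(p₂:ℝ)^2) := by
    intro k
    push_cast
    linear_combination hzq + 2*(k:ℝ)*hzp
  have hQa : ((A1:ℤ):ℝ)^2 + κ^2*((A2:ℤ):ℝ)^2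
      = ((p₁:ℝ)^2 + κ^2*(p₂:ℝ)^2)/3 + (((A1:ℝ) - z₁)^2 + κ^2*((A2:ℝ) - z₂)^2)
        + 2*(((A1:ℝ) - z₁)*z₁ + κ^2*(((A2:ℝ) - z₂)*z₂)) := by
    linear_combination hzq
  have hqa_pos : 0 < ((A1:ℤ):ℝ)^2 + κ^2*((A2:ℤ):ℝ)^2 := by
    rw [hQa]; linarith only [B1, hP0]
  have hqa_ge : (17/100)*((p₁:ℝ)^2 + κ^2*(p₂:ℝ)^2) ≤ ((A1:ℤ):ℝ)^2 + κ^2*((A2:ℤ):ℝ)^2 := by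
    rw [hQa]; linarith only [B1]
  have hqa_le : ((A1:ℤ):ℝ)^2 + κ^2*((A2:ℤ):ℝ)^2
      ≤ (537/1000)*((p₁:ℝ)^2 + κ^2*(p₂:ℝ)^2) := by
    rw [hQa]; linarith only [B2]
  have hqa_lt : ((A1:ℤ):ℝ)^2 + κ^2*((A2:ℤ):ℝ)^2 < (p₁:ℝ)^2 + κ^2*(p₂:ℝ)^2 := by
    linarith only [hqa_le, hP0]
  have hQgt : ∀ k : ℤ, k ≠ 0 →
      (p₁:ℝ)^2 + κ^2*(p₂:ℝ)^2
        < ((A1 + k * p₁ : ℤ) : ℝ)^2 + κ^2*((A2 + k * p₂ : ℤ) : ℝ)^2 := by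
    intro k hk
    rw [hQ k]
    rcases eq_or_ne k 1 with rfl | hk1
    · push_cast
      linarith only [B3p]
    rcases eq_or_ne k (-1) with rfl | hkm1
    · push_cast
      linarith only [B3m]
    have hk2 : k ≤ -2 ∨ 2 ≤ k := by omega
    have h4 : (4:ℝ) ≤ (k:ℝ)^2 := by
      rcases hk2 with h | h
      · have hR : (k:ℝ) ≤ -2 := by exact_mod_cast h
        nlinarith only [hR]
      · have hR : (2:ℝ) ≤ (k:ℝ) := by exact_mod_cast h
        nlinarith only [hR]
    exact B4 (k:ℝ) h4
  refine ⟨A1, A2, ?_, ?_, ?_, ?_, ?_⟩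
  · -- a is not parallel to p
    intro h0
    have h0R : (A1:ℝ)*(p₂:ℝ) - (A2:ℝ)*(p₁:ℝ) = 0 := by exact_mod_cast h0
    have hlag : (((A1:ℤ):ℝ)^2 + κ^2*((A2:ℤ):ℝ)^2) * ((p₁:ℝ)^2 + κ^2*(p₂:ℝ)^2)
        = ((A1:ℝ)*(p₁:ℝ) + κ^2*((A2:ℝ)*(p₂:ℝ)))^2
          + κ^2*((A1:ℝ)*(p₂:ℝ) - (A2:ℝ)*(p₁:ℝ))^2 := by ring
    rw [h0R] at hlag
    have hapD : (A1:ℝ)*(p₁:ℝ) + κ^2*((A2:ℝ)*(p₂:ℝ))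
        = ((A1:ℝ) - z₁)*(p₁:ℝ) + κ^2*(((A2:ℝ) - z₂)*(p₂:ℝ)) := by
      linear_combination hzp
    rw [hapD] at hlag
    linarith only [mul_le_mul_of_nonneg_right hqa_ge hP0.le,
      mul_lt_mul_of_pos_right hE24 hP0, mul_pos hP0 hP0, hlag, hD2]
  · -- a + kp is never zero
    intro k h
    rw [Prod.mk.injEq] at h
    have hc1 : ((A1 + k * p₁ : ℤ) : ℝ) = 0 := by exact_mod_cast h.1
    have hc2 : ((A2 + k * p₂ : ℤ) : ℝ) = 0 := by exact_mod_cast h.2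
    have hpos : 0 < ((A1 + k * p₁ : ℤ) : ℝ)^2 + κ^2*((A2 + k * p₂ : ℤ) : ℝ)^2 := by
      rcases eq_or_ne k 0 with rfl | hk
      · rw [hQ 0]
        push_cast
        linarith only [B1, hP0]
      · linarith only [hQgt k hk, hP0]
    rw [hc1, hc2] at hpos
    norm_num at hpos
  · -- ρ₀ < 0
    have := one_div_lt_one_div_of_lt hqa_pos hqa_lt
    linarith only [this]
  · -- ρ_k > 0 for k ≠ 0
    intro k hk
    have h := hQgt k hk
    have := one_div_lt_one_div_of_lt hP0 h
    linarith only [this]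
  · -- ρ₀ + ρ₂ < 0
    have hQ2 : ((A1 + 2 * p₁ : ℤ) : ℝ)^2 + κ^2*((A2 + 2 * p₂ : ℤ) : ℝ)^2
        = ((p₁:ℝ)^2 + κ^2*(p₂:ℝ)^2)/3 + (((A1:ℝ) - z₁)^2 + κ^2*((A2:ℝ) - z₂)^2)
          + 2*(((A1:ℝ) - z₁)*z₁ + κ^2*(((A2:ℝ) - z₂)*z₂))
          + 4*(((A1:ℝ) - z₁)*(p₁:ℝ) + κ^2*(((A2:ℝ) - z₂)*(p₂:ℝ)))
          + 4*((p₁:ℝ)^2 + κ^2*(p₂:ℝ)^2) := by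
      have h := hQ 2
      push_cast at h ⊢
      linarith only [h]
    have hq2_pos : 0 < ((A1 + 2 * p₁ : ℤ) : ℝ)^2 + κ^2*((A2 + 2 * p₂ : ℤ) : ℝ)^2 := by
      linarith only [hQgt 2 (by norm_num), hP0]
    have hq2_le : ((A1 + 2 * p₁ : ℤ) : ℝ)^2 + κ^2*((A2 + 2 * p₂ : ℤ) : ℝ)^2
        ≤ (129/25)*((p₁:ℝ)^2 + κ^2*(p₂:ℝ)^2) := by
      rw [hQ2]; linarith only [B5]
    have i1 := one_div_le_one_div_of_le hqa_pos hqa_le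
    have i2 := one_div_le_one_div_of_le hq2_pos hq2_le
    have e5 : (1:ℝ)/((537/1000)*((p₁:ℝ)^2 + κ^2*(p₂:ℝ)^2))
        = (1000/537)*(1/((p₁:ℝ)^2 + κ^2*(p₂:ℝ)^2)) := by
      rw [one_div, mul_inv, ← one_div, ← one_div]
      norm_num
    have e6 : (1:ℝ)/((129/25)*((p₁:ℝ)^2 + κ^2*(p₂:ℝ)^2))
        = (25/129)*(1/((p₁:ℝ)^2 + κ^2*(p₂:ℝ)^2)) := by
      rw [one_div, mul_inv, ← one_div, ← one_div]
      norm_num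
    have hiP : 0 < 1/((p₁:ℝ)^2 + κ^2*(p₂:ℝ)^2) := by positivity
    rw [e5] at i1
    rw [e6] at i2
    linarith only [i1, i2, hiP]
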